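/- Suppose S ⊆ L is nonempty, Z ⊆ C satisfies |Z| ≤ m, and cost(S, C \ Z) ≤ OPT (that is, (S, Z) is a bi-criteria approximate solution with approximation factor 1 in cost). For each x ∈ Z let g(x) ∈ L be a facility minimizing d(x, ·) over L, and let G = { g(x) : x ∈ Z }. Then for every subset C' ⊆ C with |C'| ≥ |C| − m and every partition O = (O_1, …, O_k) of C' into k (possibly empty) parts, there exists a subset S' ⊆ S ∪ G with |S'| ≤ k and S' nonempty such that Ψ(S', O) ≤ 3^z · Ψ*(O). -/

import Mathlib

open Finset

noncomputable section

/-- Minimum of `f` over a finite set (`sInf` of the image; `0` on the empty set). -/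
def minOver {X : Type*} (s : Finset X) (f : X → ℝ) : ℝ := sInf (f '' ↑s)

/-- Maximum of `f` over a finite set (`sSup` of the image; `0` on the empty set). -/
def maxOver {X : Type*} (s : Finset X) (f : X → ℝ) : ℝ := sSup (f '' ↑s)

/-- `cost(F, C') = max_{x ∈ C'} min_{f ∈ F} d(f, x)^z`. -/
def ksCost {X : Type*} [MetricSpace X] (z : ℝ) (F C' : Finset X) : ℝ :=
  maxOver C' fun x => minOver F fun f => dist f x ^ z

/-- `Ψ(F, O) = max_{1 ≤ i ≤ k} min_{f ∈ F} max_{x ∈ O_i} d(x, f)^z`. -/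
def Psi {X : Type*} [MetricSpace X] (z : ℝ) {k : ℕ} (F : Finset X)
    (O : Fin k → Finset X) : ℝ :=
  ⨆ i : Fin k, minOver F fun f => maxOver (O i) fun x => dist x f ^ z

/-- `Ψ*(O) = min_{F ⊆ L, |F| = k} Ψ(F, O)`. -/
def PsiStar {X : Type*} [MetricSpace X] (z : ℝ) (L : Finset X) {k : ℕ}
    (O : Fin k → Finset X) : ℝ :=
  sInf ((fun F => Psi z F O) '' {F : Finset X | F ⊆ L ∧ F.card = k})

/-- `OPT = min_{F ⊆ L, |F| = k, Z ⊆ C, |Z| ≤ m} cost(F, C \ Z)`. -/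
def OPTCost {X : Type*} [MetricSpace X] [DecidableEq X] (z : ℝ) (k m : ℕ)
    (L C : Finset X) : ℝ :=
  sInf ((fun p : Finset X × Finset X => ksCost z p.1 (C \ p.2)) ''
    {p : Finset X × Finset X | p.1 ⊆ L ∧ p.1.card = k ∧ p.2 ⊆ C ∧ p.2.card ≤ m})

/-! Auxiliary lemmas about `minOver` and `maxOver`. -/

lemma minOver_le {X : Type*} (s : Finset X) (f : X → ℝ) {x : X} (hx : x ∈ s) :
    minOver s f ≤ f x :=
  csInf_le (Set.Finite.bddBelow (s.finite_toSet.image f)) ⟨x, hx, rfl⟩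

lemma le_maxOver {X : Type*} (s : Finset X) (f : X → ℝ) {x : X} (hx : x ∈ s) :
    f x ≤ maxOver s f :=
  le_csSup (Set.Finite.bddAbove (s.finite_toSet.image f)) ⟨x, hx, rfl⟩

lemma exists_minOver {X : Type*} {s : Finset X} (hs : s.Nonempty) (f : X → ℝ) :
    ∃ x ∈ s, minOver s f = f x := by
  have h : sInf (f '' ↑s) ∈ f '' ↑s :=
    Set.Nonempty.csInf_mem (((Finset.coe_nonempty.mpr hs)).image f) (s.finite_toSet.image f)
  obtain ⟨x, hx, hfx⟩ := h
  exact ⟨x, hx, hfx.symm⟩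

lemma minOver_nonneg {X : Type*} {s : Finset X} {f : X → ℝ} (h : ∀ x ∈ s, 0 ≤ f x) :
    0 ≤ minOver s f :=
  Real.sInf_nonneg (by rintro y ⟨x, hx, rfl⟩; exact h x hx)

lemma maxOver_le {X : Type*} {s : Finset X} {f : X → ℝ} {a : ℝ}
    (h : ∀ x ∈ s, f x ≤ a) (ha : 0 ≤ a) : maxOver s f ≤ a :=
  Real.sSup_le (by rintro y ⟨x, hx, rfl⟩; exact h x hx) ha

lemma maxOver_nonneg {X : Type*} {s : Finset X} {f : X → ℝ} (h : ∀ x ∈ s, 0 ≤ f x) :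
    0 ≤ maxOver s f := by
  rcases s.eq_empty_or_nonempty with rfl | ⟨x, hx⟩
  · simp [maxOver]
  · exact (h x hx).trans (le_maxOver s f hx)

theorem list_outlier_k_supplier_conversion {X : Type*} [MetricSpace X] [DecidableEq X]
    (k m : ℕ) (hk : 1 ≤ k) (z : ℝ) (hz : 0 < z)
    (C L : Finset X) (hC : C.Nonempty) (hL : k ≤ L.card)
    (S : Finset X) (hSL : S ⊆ L) (hS : S.Nonempty)
    (Z : Finset X) (hZC : Z ⊆ C) (hZm : Z.card ≤ m)
    (hcost : ksCost z S (C \ Z) ≤ OPTCost z k m L C)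
    (g : X → X) (hgL : ∀ x ∈ Z, g x ∈ L)
    (hgmin : ∀ x ∈ Z, ∀ f ∈ L, dist x (g x) ≤ dist x f)
    (C' : Finset X) (hC'sub : C' ⊆ C) (hC'card : C.card - m ≤ C'.card)
    (O : Fin k → Finset X)
    (hdisj : ∀ i j, i ≠ j → Disjoint (O i) (O j))
    (hcover : Finset.univ.biUnion O = C') :
    ∃ S' : Finset X, S' ⊆ S ∪ Z.image g ∧ S'.card ≤ k ∧ S'.Nonempty ∧
      Psi z S' O ≤ (3 : ℝ) ^ z * PsiStar z L O := by
  haveI : Nonempty (Fin k) := ⟨⟨0, hk⟩⟩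
  -- The optimal k-supplier solution F* for partition O.
  have hsetfin : ({F : Finset X | F ⊆ L ∧ F.card = k}).Finite := by
    apply Set.Finite.subset (L.powersetCard k).finite_toSet
    intro F hF
    simpa [Finset.mem_powersetCard] using hF
  have hsetne : ({F : Finset X | F ⊆ L ∧ F.card = k}).Nonempty := by
    obtain ⟨F, hFL, hFc⟩ := L.exists_subset_card_eq hL
    exact ⟨F, hFL, hFc⟩
  obtain ⟨Fstar, ⟨hFL, hFcard⟩, hFeq⟩ :
      PsiStar z L O ∈ (fun F => Psi z F O) '' {F : Finset X | F ⊆ L ∧ F.card = k} :=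
    Set.Nonempty.csInf_mem (hsetne.image _) (hsetfin.image _)
  have hFne : Fstar.Nonempty := Finset.card_pos.mp (by omega)
  -- nonnegativity facts
  have hdistpow : ∀ (a b : X), (0:ℝ) ≤ dist a b ^ z := fun a b =>
    Real.rpow_nonneg dist_nonneg z
  have hPsiF_nonneg : ∀ (F : Finset X), F.Nonempty → 0 ≤ Psi z F O := by
    intro F hF
    refine Real.iSup_nonneg fun i => minOver_nonneg fun f _ => maxOver_nonneg fun x _ => ?_
    exact hdistpow x f
  have hPsiStar_nonneg : 0 ≤ PsiStar z L O := hFeq ▸ hPsiF_nonneg Fstar hFne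
  set P := PsiStar z L O with hP
  set r : ℝ := P ^ z⁻¹ with hrdef
  have hr0 : 0 ≤ r := Real.rpow_nonneg hPsiStar_nonneg _
  have hrz : r ^ z = P := Real.rpow_inv_rpow hPsiStar_nonneg hz.ne'
  have hle_r : ∀ a b : X, dist a b ^ z ≤ P → dist a b ≤ r := by
    intro a b h
    have := Real.rpow_le_rpow (hdistpow a b) h (inv_nonneg.mpr hz.le)
    rwa [Real.rpow_rpow_inv dist_nonneg hz.ne'] at this
  -- each term of Psi Fstar is ≤ P
  have hterm : ∀ i : Fin k,
      (minOver Fstar fun f => maxOver (O i) fun x => dist x f ^ z) ≤ P := by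
    intro i
    have h1 : (minOver Fstar fun f => maxOver (O i) fun x => dist x f ^ z) ≤ Psi z Fstar O :=
      le_ciSup (f := fun j => minOver Fstar fun f => maxOver (O j) fun x => dist x f ^ z)
        (Set.Finite.bddAbove (Set.finite_range _)) i
    exact le_of_le_of_eq h1 hFeq
  -- for each i, an optimal center f_i* ∈ Fstar covering O i within P
  have hopt : ∀ i : Fin k, ∃ fi ∈ Fstar, ∀ x ∈ O i, dist x fi ^ z ≤ P := by
    intro i
    obtain ⟨fi, hfi, heq⟩ := exists_minOver hFne (fun f => maxOver (O i) fun x => dist x f ^ z)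
    refine ⟨fi, hfi, fun x hx => ?_⟩
    have h2 := hterm i
    rw [heq] at h2
    exact le_trans (le_maxOver (O i) (fun y => dist y fi ^ z) hx) h2
  -- OPT ≤ PsiStar
  have hOPT : OPTCost z k m L C ≤ P := by
    have hmem : ((fun p : Finset X × Finset X => ksCost z p.1 (C \ p.2)) ''
        {p : Finset X × Finset X | p.1 ⊆ L ∧ p.1.card = k ∧ p.2 ⊆ C ∧ p.2.card ≤ m})
        (ksCost z Fstar (C \ (C \ C'))) := by
      refine ⟨(Fstar, C \ C'), ⟨hFL, hFcard, Finset.sdiff_subset, ?_⟩, rfl⟩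
      rw [Finset.card_sdiff_of_subset hC'sub]
      omega
    have hbdd : BddBelow ((fun p : Finset X × Finset X => ksCost z p.1 (C \ p.2)) ''
        {p : Finset X × Finset X | p.1 ⊆ L ∧ p.1.card = k ∧ p.2 ⊆ C ∧ p.2.card ≤ m}) := by
      refine ⟨0, ?_⟩
      rintro y ⟨p, hp, rfl⟩
      exact maxOver_nonneg fun x _ => minOver_nonneg fun f _ => hdistpow f x
    have h1 : OPTCost z k m L C ≤ ksCost z Fstar (C \ (C \ C')) := csInf_le hbdd hmem
    have h2 : C \ (C \ C') = C' := by
      rw [Finset.sdiff_sdiff_self_left, Finset.inter_eq_right.mpr hC'sub]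
    rw [h2] at h1
    refine h1.trans ?_
    refine maxOver_le (fun x hx => ?_) hPsiStar_nonneg
    have hx' : x ∈ Finset.univ.biUnion O := hcover ▸ hx
    obtain ⟨i, _, hxi⟩ := Finset.mem_biUnion.mp hx'
    obtain ⟨fi, hfiF, hfi⟩ := hopt i
    calc (minOver Fstar fun f => dist f x ^ z) ≤ dist fi x ^ z := minOver_le _ _ hfiF
      _ = dist x fi ^ z := by rw [dist_comm]
      _ ≤ P := hfi x hxi
  -- key claim: good center for each part
  have hkey : ∀ i : Fin k, ∃ f ∈ S ∪ Z.image g, ∀ y ∈ O i, dist y f ^ z ≤ (3:ℝ) ^ z * P := by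
    intro i
    rcases (O i).eq_empty_or_nonempty with he | ⟨x, hx⟩
    · exact ⟨hS.choose, Finset.mem_union_left _ hS.choose_spec, by simp [he]⟩
    obtain ⟨fi, hfiF, hfi⟩ := hopt i
    have hxr : dist x fi ≤ r := hle_r x fi (hfi x hx)
    have hbound : ∀ f : X, dist x f ≤ r → ∀ y ∈ O i, dist y f ^ z ≤ (3:ℝ) ^ z * P := by
      intro f hf y hy
      have h3 : dist y f ≤ 3 * r := by
        have := dist_triangle4 y fi x f
        have h1 : dist y fi ≤ r := hle_r y fi (hfi y hy)
        have h2 : dist fi x ≤ r := by rw [dist_comm]; exact hxr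
        linarith
      calc dist y f ^ z ≤ (3 * r) ^ z :=
            Real.rpow_le_rpow dist_nonneg h3 hz.le
        _ = (3:ℝ) ^ z * r ^ z := Real.mul_rpow (by norm_num) hr0
        _ = (3:ℝ) ^ z * P := by rw [hrz]
    by_cases hxZ : x ∈ Z
    · refine ⟨g x, Finset.mem_union_right _ (Finset.mem_image_of_mem g hxZ), ?_⟩
      exact hbound (g x) ((hgmin x hxZ fi (hFL hfiF)).trans hxr)
    · -- x ∈ C \ Z, use the nearest facility in S
      have hxC : x ∈ C :=
        hC'sub (hcover ▸ Finset.mem_biUnion.mpr ⟨i, Finset.mem_univ i, hx⟩)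
      have hxCZ : x ∈ C \ Z := Finset.mem_sdiff.mpr ⟨hxC, hxZ⟩
      obtain ⟨s, hsS, hseq⟩ := exists_minOver hS (fun f => dist f x ^ z)
      have hsx : dist s x ^ z ≤ P := by
        rw [← hseq]
        calc (minOver S fun f => dist f x ^ z) ≤ ksCost z S (C \ Z) :=
              le_maxOver (C \ Z) (fun x => minOver S fun f => dist f x ^ z) hxCZ
          _ ≤ OPTCost z k m L C := hcost
          _ ≤ P := hOPT
      refine ⟨s, Finset.mem_union_left _ hsS, ?_⟩
      refine hbound s ?_
      rw [dist_comm]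
      exact hle_r s x hsx
  choose f hfmem hfbd using hkey
  refine ⟨Finset.univ.image f, ?_, ?_, ?_, ?_⟩
  · intro b hb
    obtain ⟨i, _, rfl⟩ := Finset.mem_image.mp hb
    exact hfmem i
  · exact (Finset.card_image_le).trans (by simp)
  · exact ⟨f ⟨0, hk⟩, Finset.mem_image_of_mem f (Finset.mem_univ _)⟩
  · refine ciSup_le fun i => ?_
    have hmem : f i ∈ Finset.univ.image f := Finset.mem_image_of_mem f (Finset.mem_univ i)
    refine (minOver_le _ _ hmem).trans ?_
    exact maxOver_le (hfbd i) (mul_nonneg (Real.rpow_nonneg (by norm_num) z) hPsiStar_nonneg)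

end
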